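/- Let (X,d_X) be a distance space and a,b finite nonempty subsets of X with Hausdorff distance d_{HX}(a,b) < ∞, and let n ≥ max(|a|,|b|). Then there exist maps exhibiting d^∞ within factor 3: more precisely, there is a chain of three pairs of maps from finite index sets into X connecting a to b, witnessing d^∞_{H_nX}(a,b) ≤ 3 · d_{HX}(a,b), where H_nX is the set of subsets of X of cardinality at most n and d^∞_{H_nX} is the largest distance on H_nX making each map ξ^c : (X^n, d^∞_{X^n}) → H_nX, f ↦ f[c] (for c ⊆ {0,…,n−1}), non-expanding. Consequently d_{HX} ≤ d^∞_{H_nX} ≤ 3 · d_{HX} on H_nX. -/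

import Mathlib

open scoped ENNReal

structure DistSpace (X : Type*) where
  d : X → X → ℝ≥0∞
  refl : ∀ x, d x x = 0
  symm : ∀ x y, d x y = d y x
  triangle : ∀ x y z, d x z ≤ d x y + d y z

/-- The `ℓ^∞`-distance on `X^n`. -/
noncomputable def linfDist {X : Type*} (D : DistSpace X) {n : ℕ}
    (f g : Fin n → X) : ℝ≥0∞ :=
  ⨆ i, D.d (f i) (g i)

/-- The Hausdorff distance between finite subsets of a distance space. -/
noncomputable def hausDist {X : Type*} [DecidableEq X] (D : DistSpace X)
    (A B : Finset X) : ℝ≥0∞ :=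
  if A = B then 0
  else if A = ∅ ∨ B = ∅ then ∞
  else max (⨆ a ∈ A, ⨅ b ∈ B, D.d a b) (⨆ b ∈ B, ⨅ a ∈ A, D.d a b)

/-- The map `X^n → H_nX`, `f ↦ f[c]` for `c ⊆ {0,…,n−1}`; its image has
cardinality at most `n`. -/
def HnMap {X : Type*} [DecidableEq X] {n : ℕ} (c : Finset (Fin n)) (f : Fin n → X) :
    {s : Finset X // s.card ≤ n} :=
  ⟨c.image f, (Finset.card_image_le).trans (by simpa using Finset.card_le_univ c)⟩

/-- One-sided Hausdorff distance. -/
noncomputable def eDist {X : Type*} (D : DistSpace X) (A B : Finset X) : ℝ≥0∞ :=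
  ⨆ a ∈ A, ⨅ b ∈ B, D.d a b

lemma haus_refl {X : Type*} [DecidableEq X] (D : DistSpace X) (A : Finset X) :
    hausDist D A A = 0 := by simp [hausDist]

lemma haus_eq {X : Type*} [DecidableEq X] (D : DistSpace X) {A B : Finset X}
    (h : A ≠ B) (hA : A ≠ ∅) (hB : B ≠ ∅) :
    hausDist D A B = max (eDist D A B) (eDist D B A) := by
  rw [hausDist, if_neg h, if_neg (by push_neg; exact ⟨Finset.nonempty_iff_ne_empty.2 hA, Finset.nonempty_iff_ne_empty.2 hB⟩)]
  congr 1
  exact iSup_congr fun b => iSup_congr fun _ => iInf_congr fun a =>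
    iInf_congr fun _ => D.symm a b

lemma eDist_le {X : Type*} (D : DistSpace X) {A B : Finset X} {r : ℝ≥0∞}
    (h : ∀ x ∈ A, (⨅ y ∈ B, D.d x y) ≤ r) : eDist D A B ≤ r :=
  iSup₂_le h

lemma inf_le_eDist {X : Type*} (D : DistSpace X) {A : Finset X} (B : Finset X) {x : X}
    (hx : x ∈ A) : (⨅ y ∈ B, D.d x y) ≤ eDist D A B :=
  le_iSup₂ (f := fun x _ => ⨅ y ∈ B, D.d x y) x hx

lemma eDist_triangle {X : Type*} (D : DistSpace X) {A B C : Finset X}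
    (hB : B.Nonempty) (hC : C.Nonempty) :
    eDist D A C ≤ eDist D A B + eDist D B C := by
  apply iSup₂_le
  intro x hx
  obtain ⟨y, hyB, hy⟩ := Finset.exists_min_image B (fun y => D.d x y) hB
  obtain ⟨z, hzC, hz⟩ := Finset.exists_min_image C (fun z => D.d y z) hC
  calc (⨅ c ∈ C, D.d x c) ≤ D.d x z := iInf₂_le z hzC
    _ ≤ D.d x y + D.d y z := D.triangle x y z
    _ ≤ eDist D A B + eDist D B C := by
        apply add_le_add
        · exact le_trans (le_iInf₂ hy) (inf_le_eDist D B hx)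
        · exact le_trans (le_iInf₂ hz) (inf_le_eDist D C hyB)

lemma haus_symm {X : Type*} [DecidableEq X] (D : DistSpace X) (A B : Finset X) :
    hausDist D A B = hausDist D B A := by
  by_cases h : A = B
  · rw [h]
  by_cases hA : A = ∅
  · rw [hausDist, if_neg h, if_pos (Or.inl hA), hausDist, if_neg (fun hh => h hh.symm),
      if_pos (Or.inr hA)]
  by_cases hB : B = ∅
  · rw [hausDist, if_neg h, if_pos (Or.inr hB), hausDist, if_neg (fun hh => h hh.symm),
      if_pos (Or.inl hB)]
  rw [haus_eq D h hA hB, haus_eq D (fun hh => h hh.symm) hB hA, max_comm]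

lemma haus_triangle {X : Type*} [DecidableEq X] (D : DistSpace X) (A B C : Finset X) :
    hausDist D A C ≤ hausDist D A B + hausDist D B C := by
  by_cases hAC : A = C
  · rw [hAC, haus_refl]; exact zero_le
  by_cases hAB : A = B
  · rw [hAB, haus_refl, zero_add]
  by_cases hBC : B = C
  · rw [hBC, haus_refl, add_zero]
  by_cases hA : A = ∅
  · have hT : hausDist D A B = ⊤ := by rw [hausDist, if_neg hAB, if_pos (Or.inl hA)]
    rw [hT]; simp
  by_cases hB : B = ∅
  · have hT : hausDist D A B = ⊤ := by rw [hausDist, if_neg hAB, if_pos (Or.inr hB)]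
    rw [hT]; simp
  by_cases hC : C = ∅
  · have hT : hausDist D B C = ⊤ := by rw [hausDist, if_neg hBC, if_pos (Or.inr hC)]
    rw [hT]; simp
  have hBne : B.Nonempty := Finset.nonempty_iff_ne_empty.2 hB
  have hAne : A.Nonempty := Finset.nonempty_iff_ne_empty.2 hA
  have hCne : C.Nonempty := Finset.nonempty_iff_ne_empty.2 hC
  rw [haus_eq D hAC hA hC, haus_eq D hAB hA hB, haus_eq D hBC hB hC]
  apply max_le
  · calc eDist D A C ≤ eDist D A B + eDist D B C := eDist_triangle D hBne hCne
      _ ≤ _ := add_le_add (le_max_left _ _) (le_max_left _ _)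
  · calc eDist D C A ≤ eDist D C B + eDist D B A := eDist_triangle D hBne hAne
      _ ≤ _ := by
          rw [add_comm]
          exact add_le_add (le_max_right _ _) (le_max_right _ _)

lemma haus_nonexpanding {X : Type*} [DecidableEq X] (D : DistSpace X) {n : ℕ}
    (c : Finset (Fin n)) (f g : Fin n → X) :
    hausDist D (c.image f) (c.image g) ≤ linfDist D f g := by
  by_cases h : c.image f = c.image g
  · rw [h, haus_refl]; exact zero_le
  have hc : c.Nonempty := by
    rcases Finset.eq_empty_or_nonempty c with rfl | hc
    · simp at h
    · exact hc
  have h1 : c.image f ≠ ∅ := Finset.nonempty_iff_ne_empty.1 (hc.image f)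
  have h2 : c.image g ≠ ∅ := Finset.nonempty_iff_ne_empty.1 (hc.image g)
  rw [haus_eq D h h1 h2]
  apply max_le
  · apply eDist_le
    intro x hx
    obtain ⟨i, hi, rfl⟩ := Finset.mem_image.1 hx
    exact le_trans (iInf₂_le (g i) (Finset.mem_image_of_mem g hi))
      (le_iSup (fun j => D.d (f j) (g j)) i)
  · apply eDist_le
    intro x hx
    obtain ⟨i, hi, rfl⟩ := Finset.mem_image.1 hx
    refine le_trans (iInf₂_le (f i) (Finset.mem_image_of_mem f hi)) ?_
    rw [D.symm]
    exact le_iSup (fun j => D.d (f j) (g j)) i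

lemma exists_surj_onto {X : Type*} [DecidableEq X] {s : Finset X} (hs : s.Nonempty) {n : ℕ}
    (hcard : s.card ≤ n) : ∃ f : Fin n → X, Finset.image f Finset.univ = s := by
  obtain ⟨x0, hx0⟩ := hs
  refine ⟨fun i => s.toList.getD i x0, ?_⟩
  apply Finset.ext
  intro x
  simp only [Finset.mem_image, Finset.mem_univ, true_and]
  constructor
  · rintro ⟨i, rfl⟩
    by_cases h : (i : ℕ) < s.toList.length
    · rw [List.getD_eq_getElem _ _ h]
      exact Finset.mem_toList.1 (List.getElem_mem h)
    · rw [List.getD_eq_default _ _ (not_lt.1 h)]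
      exact hx0
  · intro hx
    obtain ⟨j, hj, hxj⟩ := List.mem_iff_getElem.1 (Finset.mem_toList.2 hx)
    have hj' : j < n := lt_of_lt_of_le (by simpa [Finset.length_toList] using hj) hcard
    exact ⟨⟨j, hj'⟩, by rw [List.getD_eq_getElem _ _ (by simpa using hj)]; exact hxj⟩

/-- For the functor `H_n` of subsets of cardinality `≤ n`, the `ℓ^∞`-metrization
distance `d^∞_{H_nX}` satisfies `d_{HX} ≤ d^∞_{H_nX} ≤ 3·d_{HX}` on `H_nX`. -/
theorem stmt17 {X : Type*} [DecidableEq X] (D : DistSpace X) (n : ℕ)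
    (dHn : {s : Finset X // s.card ≤ n} → {s : Finset X // s.card ≤ n} → ℝ≥0∞)
    (h_refl : ∀ A, dHn A A = 0)
    (h_symm : ∀ A B, dHn A B = dHn B A)
    (h_tri : ∀ A B C, dHn A C ≤ dHn A B + dHn B C)
    (h_ne : ∀ (c : Finset (Fin n)) (f g : Fin n → X),
      dHn (HnMap c f) (HnMap c g) ≤ linfDist D f g)
    (h_max : ∀ ρ : {s : Finset X // s.card ≤ n} → {s : Finset X // s.card ≤ n} → ℝ≥0∞,
      (∀ A, ρ A A = 0) → (∀ A B, ρ A B = ρ B A) →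
      (∀ A B C, ρ A C ≤ ρ A B + ρ B C) →
      (∀ (c : Finset (Fin n)) (f g : Fin n → X),
        ρ (HnMap c f) (HnMap c g) ≤ linfDist D f g) →
      ∀ A B, ρ A B ≤ dHn A B) :
    ∀ a b : {s : Finset X // s.card ≤ n},
      hausDist D a.1 b.1 ≤ dHn a b ∧ dHn a b ≤ 3 * hausDist D a.1 b.1 := by
  intro a b
  constructor
  · exact h_max (fun A B => hausDist D A.1 B.1) (fun A => haus_refl D A.1)
      (fun A B => haus_symm D A.1 B.1) (fun A B C => haus_triangle D A.1 B.1 C.1)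
      (fun c f g => haus_nonexpanding D c f g) a b
  · -- upper bound
    by_cases hab : a.1 = b.1
    · have : a = b := Subtype.ext hab
      rw [this, h_refl]
      exact zero_le
    by_cases hA : a.1 = ∅
    · rw [hausDist, if_neg hab, if_pos (Or.inl hA)]
      simp
    by_cases hB : b.1 = ∅
    · rw [hausDist, if_neg hab, if_pos (Or.inr hB)]
      simp
    have hAne : a.1.Nonempty := Finset.nonempty_iff_ne_empty.2 hA
    have hBne : b.1.Nonempty := Finset.nonempty_iff_ne_empty.2 hB
    set r := hausDist D a.1 b.1 with hr
    have hrAB : eDist D a.1 b.1 ≤ r := by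
      rw [hr, haus_eq D hab hA hB]; exact le_max_left _ _
    have hrBA : eDist D b.1 a.1 ≤ r := by
      rw [hr, haus_eq D hab hA hB]; exact le_max_right _ _
    -- nearest-point maps
    choose β hβmem hβmin using
      (fun x => Finset.exists_min_image b.1 (fun y => D.d x y) hBne)
    choose α hαmem hαmin using
      (fun y => Finset.exists_min_image a.1 (fun z => D.d y z) hAne)
    have h1 : ∀ x ∈ a.1, D.d x (β x) ≤ r := by
      intro x hx
      exact le_trans (le_trans (le_iInf₂ (hβmin x)) (inf_le_eDist D b.1 hx)) hrAB
    have h2 : ∀ y ∈ b.1, D.d y (α y) ≤ r := by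
      intro y hy
      exact le_trans (le_trans (le_iInf₂ (hαmin y)) (inf_le_eDist D a.1 hy)) hrBA
    set S : Finset X := a.1.image β with hS
    have hSb : S ⊆ b.1 := by
      intro y hy
      obtain ⟨x, _, rfl⟩ := Finset.mem_image.1 hy
      exact hβmem x
    set φ : X → X := fun y => if y ∈ S then y else β (α y) with hφ
    have hφ1 : ∀ y ∈ b.1, D.d (φ y) y ≤ r + r := by
      intro y hy
      by_cases h : y ∈ S
      · simp only [hφ, if_pos h, D.refl]
        exact zero_le
      · simp only [hφ, if_neg h]
        calc D.d (β (α y)) y ≤ D.d (β (α y)) (α y) + D.d (α y) y := D.triangle _ _ _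
          _ ≤ r + r := by
              apply add_le_add
              · rw [D.symm]; exact h1 (α y) (hαmem y)
              · rw [D.symm]; exact h2 y hy
    have hφ2 : b.1.image φ = S := by
      apply Finset.Subset.antisymm
      · intro z hz
        obtain ⟨y, hy, rfl⟩ := Finset.mem_image.1 hz
        by_cases h : y ∈ S
        · simpa [hφ, if_pos h] using h
        · simp only [hφ, if_neg h]
          exact Finset.mem_image_of_mem β (hαmem y)
      · intro z hz
        refine Finset.mem_image.2 ⟨z, hSb hz, ?_⟩
        simp [hφ, if_pos hz]
    obtain ⟨f, hf⟩ := exists_surj_onto hAne a.2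
    obtain ⟨g, hg⟩ := exists_surj_onto hBne b.2
    have hScard : S.card ≤ n := le_trans Finset.card_image_le a.2
    set Sn : {s : Finset X // s.card ≤ n} := ⟨S, hScard⟩ with hSn
    have step1 : dHn a Sn ≤ r := by
      have e1 : HnMap Finset.univ f = a := Subtype.ext hf
      have e2 : HnMap Finset.univ (β ∘ f) = Sn := by
        apply Subtype.ext
        show Finset.image (β ∘ f) Finset.univ = S
        rw [← Finset.image_image, hf]
      have := h_ne Finset.univ f (β ∘ f)
      rw [e1, e2] at this
      refine le_trans this (iSup_le fun i => ?_)
      exact h1 (f i) (by rw [← hf]; exact Finset.mem_image_of_mem f (Finset.mem_univ i))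
    have step2 : dHn Sn b ≤ r + r := by
      have e1 : HnMap Finset.univ (φ ∘ g) = Sn := by
        apply Subtype.ext
        show Finset.image (φ ∘ g) Finset.univ = S
        rw [← Finset.image_image, hg, hφ2]
      have e2 : HnMap Finset.univ g = b := Subtype.ext hg
      have := h_ne Finset.univ (φ ∘ g) g
      rw [e1, e2] at this
      refine le_trans this (iSup_le fun i => ?_)
      exact hφ1 (g i) (by rw [← hg]; exact Finset.mem_image_of_mem g (Finset.mem_univ i))
    calc dHn a b ≤ dHn a Sn + dHn Sn b := h_tri a Sn b
      _ ≤ r + (r + r) := add_le_add step1 step2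
      _ = 3 * r := by ring
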